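/- arXiv:1812.07400 — 4 statements merged into one kernel-verified Lean document; each statement's English description precedes it below -/
import Mathlib

section
/- For every β > 0 and h ≥ 0, the Jacobian matrix of the vector field V at the origin equals the 2×2 matrix M = [[−2, 2/cosh²(h)], [−2β, 2β/cosh²(h) − 1]], and the characteristic polynomial of M is X² − (2β/cosh²(h) − 3)·X + 2; consequently the eigenvalues of M (as a complex matrix) are k± = β/cosh²(h) − 3/2 ± √((β/cosh²(h) − 3/2)² − 2), where the square root is taken in ℂ. -/
open Polynomial

private lemma tanh_hasDerivAt (x : ℝ) :
    HasDerivAt Real.tanh (1 / Real.cosh x ^ 2) x := by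
  have h1 := (Real.hasDerivAt_sinh x).div (Real.hasDerivAt_cosh x)
    (ne_of_gt (Real.cosh_pos x))
  have hfun : (Real.sinh / Real.cosh) = Real.tanh :=
    funext fun y => (Real.tanh_eq_sinh_div_cosh y).symm
  rw [hfun] at h1
  refine h1.congr_deriv ?_
  have := Real.cosh_sq_sub_sinh_sq x
  rw [← this]
  ring

private lemma quad_aux (a b c d t u : ℝ) (h2 : a + d = t) (h3 : a * d - b * c = u) :
    (X - C a) * (X - C d) - (-C b) * (-C c) = X ^ 2 - C t * X + C u := by
  rw [← h2, ← h3]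
  simp only [C_add, C_sub, C_mul]
  ring

/-- For `β > 0` and `h ≥ 0`, the Jacobian at the origin of the vector field
`V(v) = (−2v₀ + tanh(v₁+h) + tanh(v₁−h), −v₁ + β(−2v₀ + tanh(v₁+h) + tanh(v₁−h)))`
is the matrix `M = [[−2, 2/cosh²h], [−2β, 2β/cosh²h − 1]]`, the characteristic
polynomial of `M` is `X² − (2β/cosh²h − 3)X + 2`, and the eigenvalues of `M`
over `ℂ` are `β/cosh²h − 3/2 ± √((β/cosh²h − 3/2)² − 2)` (square root in `ℂ`). -/
theorem jacobian_charpoly_eigenvalues (β h : ℝ) (hβ : 0 < β) (hh : 0 ≤ h)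
    (V : (Fin 2 → ℝ) → (Fin 2 → ℝ))
    (hV : ∀ v, V v =
      ![-2 * v 0 + Real.tanh (v 1 + h) + Real.tanh (v 1 - h),
        -(v 1) + β * (-2 * v 0 + Real.tanh (v 1 + h) + Real.tanh (v 1 - h))])
    (M : Matrix (Fin 2) (Fin 2) ℝ)
    (hM : M = !![-2, 2 / Real.cosh h ^ 2; -2 * β, 2 * β / Real.cosh h ^ 2 - 1]) :
    (∀ v, fderiv ℝ V 0 v = M.mulVec v) ∧
    M.charpoly = X ^ 2 - C (2 * β / Real.cosh h ^ 2 - 3) * X + C 2 ∧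
    (∀ z : ℂ, z ∈ spectrum ℂ (M.map (fun x : ℝ => (x : ℂ))) ↔
      z = ((β / Real.cosh h ^ 2 - 3 / 2 : ℝ) : ℂ)
            + (((β / Real.cosh h ^ 2 - 3 / 2 : ℝ) : ℂ) ^ 2 - 2) ^ ((1 : ℂ) / 2) ∨
      z = ((β / Real.cosh h ^ 2 - 3 / 2 : ℝ) : ℂ)
            - (((β / Real.cosh h ^ 2 - 3 / 2 : ℝ) : ℂ) ^ 2 - 2) ^ ((1 : ℂ) / 2)) := by
  have hc0 : Real.cosh h ≠ 0 := ne_of_gt (Real.cosh_pos h)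
  have hc2 : Real.cosh h ^ 2 ≠ 0 := pow_ne_zero _ hc0
  -- notation for projections
  set p0 : (Fin 2 → ℝ) →L[ℝ] ℝ := ContinuousLinearMap.proj 0 with hp0
  set p1 : (Fin 2 → ℝ) →L[ℝ] ℝ := ContinuousLinearMap.proj 1 with hp1
  have ha : HasFDerivAt (fun v : Fin 2 → ℝ => v 0) p0 0 := p0.hasFDerivAt
  have hb : HasFDerivAt (fun v : Fin 2 → ℝ => v 1) p1 0 := p1.hasFDerivAt
  have htA : HasFDerivAt (fun v : Fin 2 → ℝ => Real.tanh (v 1 + h))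
      ((1 / Real.cosh h ^ 2) • p1) 0 := by
    have := HasDerivAt.comp_hasFDerivAt_of_eq 0 (tanh_hasDerivAt h) (hb.add_const h)
      (by simp)
    exact this
  have htB : HasFDerivAt (fun v : Fin 2 → ℝ => Real.tanh (v 1 - h))
      ((1 / Real.cosh h ^ 2) • p1) 0 := by
    have hd : HasDerivAt Real.tanh (1 / Real.cosh h ^ 2) (-h) := by
      simpa [Real.cosh_neg] using tanh_hasDerivAt (-h)
    have := HasDerivAt.comp_hasFDerivAt_of_eq 0 hd (hb.sub_const h) (by simp)
    exact this
  set D0 : (Fin 2 → ℝ) →L[ℝ] ℝ :=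
    ((-2 : ℝ) • p0 + (1 / Real.cosh h ^ 2) • p1) + (1 / Real.cosh h ^ 2) • p1 with hD0
  have h0 : HasFDerivAt
      (fun v : Fin 2 → ℝ => -2 * v 0 + Real.tanh (v 1 + h) + Real.tanh (v 1 - h)) D0 0 :=
    ((ha.const_mul (-2)).add htA).add htB
  set D1 : (Fin 2 → ℝ) →L[ℝ] ℝ := -p1 + β • D0 with hD1
  have h1 : HasFDerivAt
      (fun v : Fin 2 → ℝ => -(v 1) +
        β * (-2 * v 0 + Real.tanh (v 1 + h) + Real.tanh (v 1 - h))) D1 0 :=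
    (hb.neg).add (h0.const_mul β)
  have hVpi : HasFDerivAt V (ContinuousLinearMap.pi ![D0, D1]) 0 := by
    have hpi : HasFDerivAt
        (fun (v : Fin 2 → ℝ) (i : Fin 2) =>
          ![fun v : Fin 2 → ℝ => -2 * v 0 + Real.tanh (v 1 + h) + Real.tanh (v 1 - h),
            fun v : Fin 2 → ℝ => -(v 1) +
              β * (-2 * v 0 + Real.tanh (v 1 + h) + Real.tanh (v 1 - h))] i v)
        (ContinuousLinearMap.pi ![D0, D1]) 0 := by
      apply hasFDerivAt_pi.2
      intro i
      fin_cases i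
      · simpa using h0
      · simpa using h1
    have hVeq : V = fun (v : Fin 2 → ℝ) (i : Fin 2) =>
        ![fun v : Fin 2 → ℝ => -2 * v 0 + Real.tanh (v 1 + h) + Real.tanh (v 1 - h),
          fun v : Fin 2 → ℝ => -(v 1) +
            β * (-2 * v 0 + Real.tanh (v 1 + h) + Real.tanh (v 1 - h))] i v := by
      funext v
      rw [hV]
      funext i
      fin_cases i <;> rfl
    rw [hVeq]
    exact hpi
  refine ⟨?_, ?_, ?_⟩
  · intro v
    rw [hVpi.fderiv]
    funext i
    fin_cases i <;>
      simp [hM, Matrix.mulVec, dotProduct, Fin.sum_univ_two, hD0, hD1, hp0, hp1] <;>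
      ring
  · rw [Matrix.charpoly, Matrix.det_fin_two,
      Matrix.charmatrix_apply_eq, Matrix.charmatrix_apply_eq,
      Matrix.charmatrix_apply_ne _ _ _ (by decide),
      Matrix.charmatrix_apply_ne _ _ _ (by decide), hM]
    apply quad_aux
    · simp
      ring
    · simp
      field_simp
      ring
  · intro z
    set a : ℂ := ((β / Real.cosh h ^ 2 - 3 / 2 : ℝ) : ℂ) with haa
    set s : ℂ := (a ^ 2 - 2) ^ ((1 : ℂ) / 2) with hss
    have hs2 : s ^ 2 = a ^ 2 - 2 := by
      rw [hss]
      rw [one_div]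
      exact Complex.cpow_ofNat_inv_pow _ 2
    have haa' : a = (β : ℂ) / (Complex.cosh (h : ℂ)) ^ 2 - 3 / 2 := by
      rw [haa]; push_cast; ring
    rw [spectrum.mem_iff]
    have hdet : ((algebraMap ℂ (Matrix (Fin 2) (Fin 2) ℂ)) z -
        M.map fun x : ℝ => (x : ℂ)).det = (z - (a + s)) * (z - (a - s)) := by
      rw [hM, Matrix.det_fin_two]
      simp [Matrix.algebraMap_matrix_apply]
      push_cast
      linear_combination hs2 + 2 * z * haa'
    rw [Matrix.isUnit_iff_isUnit_det, isUnit_iff_ne_zero, not_ne_iff, hdet,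
      mul_eq_zero, sub_eq_zero, sub_eq_zero]
end

section
/- Let h ≥ 0 and β > (3/2)·cosh²(h). Then there exists exactly one λ > 0 such that Γ_{β,h}(λ) = λ. -/
open Real Set Filter

private lemma HasDerivAt.congr_d {f : ℝ → ℝ} {v w : ℝ} {x : ℝ}
    (h : HasDerivAt f v x) (hvw : v = w) : HasDerivAt f w x := hvw ▸ h

/-- If `f 0 = 0`, `f` has derivative `g` everywhere, and `g > 0` on `(0,∞)`,
then `f > 0` on `(0,∞)`. -/
private lemma aux_pos_of_deriv {f g : ℝ → ℝ} (h0 : f 0 = 0)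
    (hd : ∀ x : ℝ, HasDerivAt f (g x) x)
    (hg : ∀ x : ℝ, 0 < x → 0 < g x) :
    ∀ x : ℝ, 0 < x → 0 < f x := by
  intro x hx
  have hmono : StrictMonoOn f (Set.Ici 0) := by
    apply strictMonoOn_of_deriv_pos (convex_Ici 0)
    · exact fun y _ => (hd y).continuousAt.continuousWithinAt
    · intro y hy
      rw [interior_Ici] at hy
      rw [(hd y).deriv]
      exact hg y hy
  have := hmono Set.self_mem_Ici (Set.mem_Ici.mpr hx.le) hx
  rwa [h0] at this

private lemma cosh_lb (u : ℝ) (hu : 0 < u) : 1 + u ^ 2 / 2 < Real.cosh u := by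
  have h := aux_pos_of_deriv (f := fun v => Real.cosh v - (1 + v ^ 2 / 2))
    (g := fun v => Real.sinh v - v) (by norm_num)
    (fun v => ((Real.hasDerivAt_cosh v).sub
        (((hasDerivAt_pow 2 v).div_const 2).const_add 1)).congr_d (by push_cast; ring))
    (fun v hv => by
      have := Real.self_lt_sinh_iff.mpr hv
      show (0:ℝ) < Real.sinh v - v
      linarith)
  have := h u hu
  linarith

private lemma q_pos (u : ℝ) (hu : 0 < u) : 0 < u * Real.cosh u - Real.sinh u := by
  refine aux_pos_of_deriv (f := fun v => v * Real.cosh v - Real.sinh v)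
    (g := fun v => v * Real.sinh v) (by norm_num)
    (fun v => (((hasDerivAt_id' v).mul (Real.hasDerivAt_cosh v)).sub
      (Real.hasDerivAt_sinh v)).congr_d (by ring))
    (fun v hv => by
      show (0:ℝ) < v * Real.sinh v
      exact mul_pos hv (Real.sinh_pos_iff.mpr hv)) u hu

private lemma r_pos (u : ℝ) (hu : 0 < u) : 0 < Real.sinh u - u := by
  have := Real.self_lt_sinh_iff.mpr hu; linarith

private lemma E7_pos (u : ℝ) (hu : 0 < u) :
    0 < 64 * (Real.cosh u ^ 2 + Real.sinh u ^ 2) - 36 * Real.cosh u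
      - 13 * (u * Real.sinh u) - u ^ 2 * Real.cosh u := by
  have h1 := cosh_lb u hu
  have h2 := Real.sinh_lt_cosh u
  have h3 := Real.sinh_pos_iff.mpr hu
  have h4 := Real.self_lt_sinh_iff.mpr hu
  have h5 := Real.one_le_cosh u
  have hC : 0 < Real.cosh u := Real.cosh_pos u
  nlinarith [sq_nonneg (Real.cosh u - 1), sq_nonneg (Real.sinh u),
    mul_pos hC hC, mul_lt_mul_of_pos_right h2 hC,
    mul_lt_mul_of_pos_right (h4.trans h2) hC,
    mul_le_mul_of_nonneg_left h1.le hC.le]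

private lemma E6_pos (u : ℝ) (hu : 0 < u) :
    0 < 64 * (Real.sinh u * Real.cosh u) - 25 * Real.sinh u
      - 11 * (u * Real.cosh u) - u ^ 2 * Real.sinh u := by
  refine aux_pos_of_deriv
    (f := fun v => 64 * (Real.sinh v * Real.cosh v) - 25 * Real.sinh v
      - 11 * (v * Real.cosh v) - v ^ 2 * Real.sinh v)
    (g := fun v => 64 * (Real.cosh v ^ 2 + Real.sinh v ^ 2) - 36 * Real.cosh v
      - 13 * (v * Real.sinh v) - v ^ 2 * Real.cosh v)
    (by norm_num) (fun v => ?_) E7_pos u hu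
  have hs := Real.hasDerivAt_sinh v
  have hc := Real.hasDerivAt_cosh v
  exact (((((hs.mul hc).const_mul (64:ℝ)).sub (hs.const_mul 25)).sub
    (((hasDerivAt_id' v).mul hc).const_mul 11)).sub
    ((hasDerivAt_pow 2 v).mul hs)).congr_d (by push_cast; ring)

private lemma E5_pos (u : ℝ) (hu : 0 < u) :
    0 < 16 * (Real.cosh u ^ 2 + Real.sinh u ^ 2) - 16 * Real.cosh u
      - 9 * (u * Real.sinh u) - u ^ 2 * Real.cosh u := by
  refine aux_pos_of_deriv
    (f := fun v => 16 * (Real.cosh v ^ 2 + Real.sinh v ^ 2) - 16 * Real.cosh v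
      - 9 * (v * Real.sinh v) - v ^ 2 * Real.cosh v)
    (g := fun v => 64 * (Real.sinh v * Real.cosh v) - 25 * Real.sinh v
      - 11 * (v * Real.cosh v) - v ^ 2 * Real.sinh v)
    (by norm_num) (fun v => ?_) E6_pos u hu
  have hs := Real.hasDerivAt_sinh v
  have hc := Real.hasDerivAt_cosh v
  exact ((((((hc.pow 2).add (hs.pow 2)).const_mul (16:ℝ)).sub (hc.const_mul 16)).sub
    (((hasDerivAt_id' v).mul hs).const_mul 9)).sub
    ((hasDerivAt_pow 2 v).mul hc)).congr_d (by push_cast; ring)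

private lemma E4_pos (u : ℝ) (hu : 0 < u) :
    0 < 16 * (Real.sinh u * Real.cosh u) - 9 * Real.sinh u
      - 7 * (u * Real.cosh u) - u ^ 2 * Real.sinh u := by
  refine aux_pos_of_deriv
    (f := fun v => 16 * (Real.sinh v * Real.cosh v) - 9 * Real.sinh v
      - 7 * (v * Real.cosh v) - v ^ 2 * Real.sinh v)
    (g := fun v => 16 * (Real.cosh v ^ 2 + Real.sinh v ^ 2) - 16 * Real.cosh v
      - 9 * (v * Real.sinh v) - v ^ 2 * Real.cosh v)
    (by norm_num) (fun v => ?_) E5_pos u hu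
  have hs := Real.hasDerivAt_sinh v
  have hc := Real.hasDerivAt_cosh v
  exact (((((hs.mul hc).const_mul (16:ℝ)).sub (hs.const_mul 9)).sub
    (((hasDerivAt_id' v).mul hc).const_mul 7)).sub
    ((hasDerivAt_pow 2 v).mul hs)).congr_d (by push_cast; ring)

private lemma E3_pos (u : ℝ) (hu : 0 < u) :
    0 < 4 * (Real.cosh u ^ 2 + Real.sinh u ^ 2) - 4 * Real.cosh u
      - 5 * (u * Real.sinh u) - u ^ 2 * Real.cosh u := by
  refine aux_pos_of_deriv
    (f := fun v => 4 * (Real.cosh v ^ 2 + Real.sinh v ^ 2) - 4 * Real.cosh v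
      - 5 * (v * Real.sinh v) - v ^ 2 * Real.cosh v)
    (g := fun v => 16 * (Real.sinh v * Real.cosh v) - 9 * Real.sinh v
      - 7 * (v * Real.cosh v) - v ^ 2 * Real.sinh v)
    (by norm_num) (fun v => ?_) E4_pos u hu
  have hs := Real.hasDerivAt_sinh v
  have hc := Real.hasDerivAt_cosh v
  exact ((((((hc.pow 2).add (hs.pow 2)).const_mul (4:ℝ)).sub (hc.const_mul 4)).sub
    (((hasDerivAt_id' v).mul hs).const_mul 5)).sub
    ((hasDerivAt_pow 2 v).mul hc)).congr_d (by push_cast; ring)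

private lemma E2_pos (u : ℝ) (hu : 0 < u) :
    0 < 4 * (Real.sinh u * Real.cosh u) - Real.sinh u
      - 3 * (u * Real.cosh u) - u ^ 2 * Real.sinh u := by
  refine aux_pos_of_deriv
    (f := fun v => 4 * (Real.sinh v * Real.cosh v) - Real.sinh v
      - 3 * (v * Real.cosh v) - v ^ 2 * Real.sinh v)
    (g := fun v => 4 * (Real.cosh v ^ 2 + Real.sinh v ^ 2) - 4 * Real.cosh v
      - 5 * (v * Real.sinh v) - v ^ 2 * Real.cosh v)
    (by norm_num) (fun v => ?_) E3_pos u hu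
  have hs := Real.hasDerivAt_sinh v
  have hc := Real.hasDerivAt_cosh v
  exact ((((hs.mul hc).const_mul (4:ℝ)).sub hs).sub
    (((hasDerivAt_id' v).mul hc).const_mul 3)).sub
    ((hasDerivAt_pow 2 v).mul hs) |>.congr_d (by push_cast; ring)

private lemma E1_pos (u : ℝ) (hu : 0 < u) :
    0 < (Real.cosh u ^ 2 + Real.sinh u ^ 2) - 1
      - (u * Real.sinh u) - u ^ 2 * Real.cosh u := by
  refine aux_pos_of_deriv
    (f := fun v => (Real.cosh v ^ 2 + Real.sinh v ^ 2) - 1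
      - (v * Real.sinh v) - v ^ 2 * Real.cosh v)
    (g := fun v => 4 * (Real.sinh v * Real.cosh v) - Real.sinh v
      - 3 * (v * Real.cosh v) - v ^ 2 * Real.sinh v)
    (by norm_num) (fun v => ?_) E2_pos u hu
  have hs := Real.hasDerivAt_sinh v
  have hc := Real.hasDerivAt_cosh v
  exact ((((hc.pow 2).add (hs.pow 2)).sub_const 1).sub
    ((hasDerivAt_id' v).mul hs)).sub
    ((hasDerivAt_pow 2 v).mul hc) |>.congr_d (by push_cast; ring)

private lemma E0_pos (u : ℝ) (hu : 0 < u) :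
    0 < Real.sinh u * Real.cosh u + u * Real.cosh u
      - u ^ 2 * Real.sinh u - Real.sinh u - u := by
  refine aux_pos_of_deriv
    (f := fun v => Real.sinh v * Real.cosh v + v * Real.cosh v
      - v ^ 2 * Real.sinh v - Real.sinh v - v)
    (g := fun v => (Real.cosh v ^ 2 + Real.sinh v ^ 2) - 1
      - (v * Real.sinh v) - v ^ 2 * Real.cosh v)
    (by norm_num) (fun v => ?_) E1_pos u hu
  have hs := Real.hasDerivAt_sinh v
  have hc := Real.hasDerivAt_cosh v
  exact (((((hs.mul hc).add ((hasDerivAt_id' v).mul hc)).sub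
    ((hasDerivAt_pow 2 v).mul hs)).sub hs).sub (hasDerivAt_id' v)).congr_d
    (by push_cast; ring)

/-- `(u cosh u - sinh u)/(sinh u - u)` is strictly increasing on `(0, ∞)`. -/
private lemma g_strictMono :
    StrictMonoOn (fun u => (u * Real.cosh u - Real.sinh u) / (Real.sinh u - u)) (Set.Ioi 0) := by
  apply strictMonoOn_of_deriv_pos (convex_Ioi 0)
  · apply ContinuousOn.div
    · fun_prop
    · fun_prop
    · exact fun u hu => ne_of_gt (r_pos u hu)
  · intro u hu
    rw [interior_Ioi] at hu
    have hdq : HasDerivAt (fun v => v * Real.cosh v - Real.sinh v) (u * Real.sinh u) u :=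
      (((hasDerivAt_id' u).mul (Real.hasDerivAt_cosh u)).sub
        (Real.hasDerivAt_sinh u)).congr_d (by ring)
    have hdr : HasDerivAt (fun v => Real.sinh v - v) (Real.cosh u - 1) u :=
      (Real.hasDerivAt_sinh u).sub (hasDerivAt_id' u)
    have hdiv := hdq.div hdr (ne_of_gt (r_pos u hu))
    rw [(show HasDerivAt (fun u => (u * Real.cosh u - Real.sinh u) / (Real.sinh u - u)) _ u from hdiv).deriv]
    apply div_pos
    · have hnum : u * Real.sinh u * (Real.sinh u - u)
          - (u * Real.cosh u - Real.sinh u) * (Real.cosh u - 1)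
          = Real.sinh u * Real.cosh u + u * Real.cosh u
            - u ^ 2 * Real.sinh u - Real.sinh u - u := by
        linear_combination (-u) * Real.cosh_sq u
      rw [hnum]
      exact E0_pos u hu
    · exact pow_pos (r_pos u hu) 2

/-- `sinh u / u` is strictly increasing on `(0, ∞)`. -/
private lemma s_strictMono : StrictMonoOn (fun u => Real.sinh u / u) (Set.Ioi 0) := by
  apply strictMonoOn_of_deriv_pos (convex_Ioi 0)
  · apply ContinuousOn.div
    · fun_prop
    · fun_prop
    · exact fun u hu => ne_of_gt hu
  · intro u hu
    rw [interior_Ioi] at hu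
    have hdiv := (Real.hasDerivAt_sinh u).div (hasDerivAt_id' u) (ne_of_gt hu)
    rw [(show HasDerivAt (fun u => Real.sinh u / u) _ u from hdiv).deriv]
    apply div_pos
    · nlinarith [q_pos u hu]
    · exact pow_pos hu 2

/-- For `h ≥ 0` and `β > (3/2)cosh²h`, the fixed point equation
`Γ_{β,h}(x) = x` has exactly one positive solution. -/
theorem unique_positive_fixed_point_supercritical (β h : ℝ) (hh : 0 ≤ h)
    (hβ : 3 / 2 * Real.cosh h ^ 2 < β)
    (Γ : ℝ → ℝ)
    (hΓ : ∀ x, Γ x = β / 3 * (Real.tanh (x + h) + Real.tanh (x - h))) :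
    ∃! x : ℝ, 0 < x ∧ Γ x = x := by
  have hch := Real.one_le_cosh h
  have hβ0 : 0 < β := by nlinarith
  have hc2h : Real.cosh (2 * h) = 2 * Real.cosh h ^ 2 - 1 := by
    rw [Real.cosh_two_mul]
    have := Real.cosh_sq h
    linarith
  have hc1 : 1 ≤ Real.cosh (2 * h) := Real.one_le_cosh _
  have h4β : 3 * (1 + Real.cosh (2 * h)) < 4 * β := by rw [hc2h]; nlinarith
  set F : ℝ → ℝ := fun x => 2 * β * Real.sinh (2 * x)
      - 3 * (x * (Real.cosh (2 * x) + Real.cosh (2 * h))) with hF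
  -- equivalence of the fixed-point equation
  have hequiv : ∀ x : ℝ, (Γ x = x ↔ F x = 0) := by
    intro x
    have hp1 : (0:ℝ) < Real.cosh (x + h) := Real.cosh_pos _
    have hp2 : (0:ℝ) < Real.cosh (x - h) := Real.cosh_pos _
    have hprod : 2 * (Real.cosh (x + h) * Real.cosh (x - h))
        = Real.cosh (2 * x) + Real.cosh (2 * h) := by
      rw [Real.cosh_add, Real.cosh_sub, Real.cosh_two_mul, Real.cosh_two_mul]
      linear_combination (2 * Real.cosh h ^ 2 - 1) * Real.cosh_sq x
        + (2 * Real.sinh x ^ 2 + 1) * Real.cosh_sq h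
    have hs2 : Real.sinh (2 * x)
        = Real.sinh (x + h) * Real.cosh (x - h) + Real.cosh (x + h) * Real.sinh (x - h) := by
      rw [show (2:ℝ) * x = (x + h) + (x - h) by ring, Real.sinh_add]
    have hΓx : Γ x = (β * Real.sinh (2 * x))
        / (3 * (Real.cosh (x + h) * Real.cosh (x - h))) := by
      rw [hΓ x, Real.tanh_eq_sinh_div_cosh, Real.tanh_eq_sinh_div_cosh,
        div_add_div _ _ (ne_of_gt hp1) (ne_of_gt hp2), div_mul_div_comm, hs2]
    rw [hΓx]
    simp only [hF]
    rw [div_eq_iff (by positivity), sub_eq_zero]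
    constructor
    · intro h'
      linear_combination 2 * h' + 3 * x * hprod
    · intro h'
      linear_combination h' / 2 - 3 * x / 2 * hprod
  -- uniqueness core
  have hcore : ∀ s t : ℝ, 0 < s → s < t
      → 4 * β * Real.sinh s = 3 * (s * (Real.cosh s + Real.cosh (2 * h)))
      → 4 * β * Real.sinh t = 3 * (t * (Real.cosh t + Real.cosh (2 * h)))
      → False := by
    intro s t hs hst h1 h2
    have ht : 0 < t := hs.trans hst
    have hsinhs : 0 < Real.sinh s := Real.sinh_pos_iff.mpr hs
    have hsinht : 0 < Real.sinh t := Real.sinh_pos_iff.mpr ht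
    have hrs := r_pos s hs
    have hrt := r_pos t ht
    have hA : Real.cosh (2 * h) * (Real.sinh t - t) < t * Real.cosh t - Real.sinh t := by
      nlinarith [mul_lt_mul_of_pos_right h4β hsinht]
    have hcross : Real.cosh (2 * h) * (s * Real.sinh t - t * Real.sinh s)
        = t * Real.sinh s * Real.cosh t - s * Real.sinh t * Real.cosh s := by
      linear_combination (Real.sinh s * h2 - Real.sinh t * h1) / 3
    have hmain : (s * Real.cosh s - Real.sinh s) * (Real.sinh t - t)
        < (t * Real.cosh t - Real.sinh t) * (Real.sinh s - s) := by
      have hg := g_strictMono (Set.mem_Ioi.mpr hs) (Set.mem_Ioi.mpr ht) hst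
      simp only at hg
      exact (div_lt_div_iff₀ hrs hrt).mp hg
    have hsm : 0 < s * Real.sinh t - t * Real.sinh s := by
      have hg := s_strictMono (Set.mem_Ioi.mpr hs) (Set.mem_Ioi.mpr ht) hst
      simp only at hg
      nlinarith [(div_lt_div_iff₀ hs ht).mp hg]
    have e1 : Real.cosh (2 * h) * (Real.sinh t - t) * (s * Real.sinh t - t * Real.sinh s)
        - (t * Real.cosh t - Real.sinh t) * (s * Real.sinh t - t * Real.sinh s)
        = Real.sinh t * ((t * Real.cosh t - Real.sinh t) * (Real.sinh s - s)
          - (s * Real.cosh s - Real.sinh s) * (Real.sinh t - t)) := by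
      linear_combination (Real.sinh t - t) * hcross
    have e2 : 0 < Real.sinh t * ((t * Real.cosh t - Real.sinh t) * (Real.sinh s - s)
        - (s * Real.cosh s - Real.sinh s) * (Real.sinh t - t)) := by
      apply mul_pos hsinht
      linarith
    have e3 : (t * Real.cosh t - Real.sinh t) * (s * Real.sinh t - t * Real.sinh s)
        < Real.cosh (2 * h) * (Real.sinh t - t) * (s * Real.sinh t - t * Real.sinh s) := by
      linarith
    have e4 : t * Real.cosh t - Real.sinh t < Real.cosh (2 * h) * (Real.sinh t - t) :=
      lt_of_mul_lt_mul_right e3 hsm.le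
    linarith
  -- existence
  have hF0 : F 0 = 0 := by simp [hF]
  have hdF0 : HasDerivAt F (4 * β - 3 * (1 + Real.cosh (2 * h))) 0 := by
    have hsin : HasDerivAt (fun x : ℝ => Real.sinh (2 * x)) (Real.cosh (2 * 0) * (2 * 1)) 0 :=
      (Real.hasDerivAt_sinh (2 * 0)).comp 0 ((hasDerivAt_id' 0).const_mul 2)
    have hcos : HasDerivAt (fun x : ℝ => Real.cosh (2 * x)) (Real.sinh (2 * 0) * (2 * 1)) 0 :=
      (Real.hasDerivAt_cosh (2 * 0)).comp 0 ((hasDerivAt_id' 0).const_mul 2)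
    rw [hF]
    exact ((hsin.const_mul (2 * β)).sub
      (((hasDerivAt_id' 0).mul (hcos.add_const (Real.cosh (2 * h)))).const_mul 3)).congr_d
      (by norm_num; ring)
  have hLpos : 0 < 4 * β - 3 * (1 + Real.cosh (2 * h)) := by linarith
  have hslope := hasDerivAt_iff_tendsto_slope.mp hdF0
  have hev1 : ∀ᶠ y in nhdsWithin 0 (Set.Ioi 0), 0 < slope F 0 y := by
    have hnn : nhdsWithin (0:ℝ) (Set.Ioi 0) ≤ nhdsWithin 0 {0}ᶜ :=
      nhdsWithin_mono 0 (fun y hy => ne_of_gt hy)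
    exact (hslope.eventually (eventually_gt_nhds hLpos)).filter_mono hnn
  have hev2 : ∀ᶠ y in nhdsWithin (0:ℝ) (Set.Ioi 0), y ∈ Set.Ioo (0:ℝ) β :=
    Filter.eventually_of_mem (Ioo_mem_nhdsGT_of_mem ⟨le_refl 0, hβ0⟩) (fun y hy => hy)
  obtain ⟨y, hy1, hy2⟩ := (hev1.and hev2).exists
  have hy0 : 0 < y := hy2.1
  have hyβ : y < β := hy2.2
  have hFy : 0 < F y := by
    rw [slope_def_field, hF0, sub_zero, sub_zero] at hy1
    have := mul_pos hy1 hy0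
    rwa [div_mul_cancel₀ _ (ne_of_gt hy0)] at this
  have hFβ : F β < 0 := by
    simp only [hF]
    nlinarith [Real.sinh_lt_cosh (2 * β), Real.cosh_pos (2 * β), hc1]
  have hcont : ContinuousOn F (Set.Icc y β) := by
    apply Continuous.continuousOn
    rw [hF]
    fun_prop
  obtain ⟨x0, hx0mem, hx0⟩ :=
    intermediate_value_Icc' (le_of_lt hyβ) hcont ⟨le_of_lt hFβ, le_of_lt hFy⟩
  have hx0pos : 0 < x0 := lt_of_lt_of_le hy0 hx0mem.1
  -- translating `F a = 0` into the scaled equation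
  have htrans : ∀ a : ℝ, F a = 0
      → 4 * β * Real.sinh (2 * a) = 3 * ((2 * a) * (Real.cosh (2 * a) + Real.cosh (2 * h))) := by
    intro a ha
    simp only [hF] at ha
    linear_combination 2 * ha
  refine ⟨x0, ⟨hx0pos, (hequiv x0).mpr hx0⟩, ?_⟩
  rintro z ⟨hz0, hzfix⟩
  have hFz : F z = 0 := (hequiv z).mp hzfix
  rcases lt_trichotomy z x0 with hlt | heq | hgt
  · exact (hcore (2 * z) (2 * x0) (by linarith) (by linarith)
      (htrans z hFz) (htrans x0 hx0)).elim
  · exact heq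
  · exact (hcore (2 * x0) (2 * z) (by linarith) (by linarith)
      (htrans x0 hx0) (htrans z hFz)).elim
end

section
/- Let h > (1/2)·ln(2+√3) and β = (3/2)·cosh²(h). Then there exists exactly one λ > 0 such that Γ_{β,h}(λ) = λ. -/
open Real Set


private lemma my_nonneg_of_deriv {f f' : ℝ → ℝ}
    (hd : ∀ x, HasDerivAt f (f' x) x) (h0 : f 0 = 0)
    (hp : ∀ x, 0 ≤ x → 0 ≤ f' x) : ∀ x, 0 ≤ x → 0 ≤ f x := by
  intro x hx
  have hmono : MonotoneOn f (Set.Ici 0) := by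
    apply monotoneOn_of_deriv_nonneg (convex_Ici 0)
    · exact fun y _ => (hd y).continuousAt.continuousWithinAt
    · exact fun y hy => ((hd y).differentiableAt).differentiableWithinAt
    · intro y hy
      rw [interior_Ici] at hy
      rw [(hd y).deriv]
      exact hp y (le_of_lt hy)
  have := hmono Set.self_mem_Ici (Set.mem_Ici.mpr hx) hx
  linarith [h0 ▸ this]

private lemma my_pos_of_deriv {f f' : ℝ → ℝ}
    (hd : ∀ x, HasDerivAt f (f' x) x) (h0 : f 0 = 0)
    (hp : ∀ x, 0 < x → 0 < f' x) : ∀ x, 0 < x → 0 < f x := by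
  intro x hx
  have hmono : StrictMonoOn f (Set.Ici 0) := by
    apply strictMonoOn_of_deriv_pos (convex_Ici 0)
    · exact continuousOn_of_forall_continuousAt (fun y _ => (hd y).continuousAt)
    · intro y hy
      rw [interior_Ici] at hy
      rw [(hd y).deriv]
      exact hp y hy
  have := hmono Set.self_mem_Ici (Set.mem_Ici.mpr hx.le) hx
  linarith [h0 ▸ this]

private lemma my_cosh_lb (x : ℝ) (hx : 0 ≤ x) : 1 + x^2/2 ≤ Real.cosh x := by
  have := my_nonneg_of_deriv (f := fun y => Real.cosh y - 1 - y^2/2)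
    (f' := fun y => Real.sinh y - y) (fun y => by
      refine (((Real.hasDerivAt_cosh y).sub_const 1).sub
        (((hasDerivAt_pow 2 y)).div_const 2)).congr_deriv ?_
      simp) (by simp)
    (fun y hy => by simpa using Real.self_le_sinh_iff.mpr hy) x hx
  linarith

private lemma my_sinh_lb (x : ℝ) (hx : 0 ≤ x) : x + x^3/6 ≤ Real.sinh x := by
  have := my_nonneg_of_deriv (f := fun y => Real.sinh y - y - y^3/6)
    (f' := fun y => Real.cosh y - 1 - y^2/2) (fun y => by
      have h := ((Real.hasDerivAt_sinh y).sub (hasDerivAt_id y)).sub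
        ((hasDerivAt_pow 3 y).div_const 6)
      refine h.congr_deriv ?_
      simp; ring) (by simp)
    (fun y hy => by linarith [my_cosh_lb y hy]) x hx
  linarith

private lemma my_scs_pos (x : ℝ) (hx : 0 < x) : Real.sinh x < x * Real.cosh x := by
  have := my_pos_of_deriv (f := fun y => y * Real.cosh y - Real.sinh y)
    (f' := fun y => y * Real.sinh y) (fun y => by
      have h := ((hasDerivAt_id y).mul (Real.hasDerivAt_cosh y)).sub (Real.hasDerivAt_sinh y)
      refine h.congr_deriv ?_
      simp) (by simp)
    (fun y hy => mul_pos hy (Real.sinh_pos_iff.mpr hy)) x hx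
  linarith

private lemma my_p_pos (s : ℝ) (hs : 0 < s) :
    0 < Real.sinh s^2 * Real.cosh s + s * Real.sinh s - 2*s^2*Real.cosh s := by
  have := my_pos_of_deriv
    (f := fun y => Real.sinh y^2 * Real.cosh y + y * Real.sinh y - 2*y^2*Real.cosh y)
    (f' := fun y => (2*Real.sinh y*Real.cosh y*Real.cosh y + Real.sinh y^2*Real.sinh y)
      + (Real.sinh y + y*Real.cosh y) - (4*y*Real.cosh y + 2*y^2*Real.sinh y))
    (fun y => by
      have h1 := (((Real.hasDerivAt_sinh y).pow 2).mul (Real.hasDerivAt_cosh y)).add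
        ((hasDerivAt_id y).mul (Real.hasDerivAt_sinh y))
      have h2 := (((hasDerivAt_pow 2 y).const_mul 2).mul (Real.hasDerivAt_cosh y))
      have h3 := h1.sub h2
      refine h3.congr_deriv ?_
      push_cast
      simp only [id_eq, Pi.pow_apply]
      ring)
    (by simp)
    (fun y hy => by
      show 0 < (2*Real.sinh y*Real.cosh y*Real.cosh y + Real.sinh y^2*Real.sinh y)
        + (Real.sinh y + y*Real.cosh y) - (4*y*Real.cosh y + 2*y^2*Real.sinh y)
      have hA : y + 2/3*y^3 ≤ Real.sinh y * Real.cosh y := by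
        have := my_sinh_lb (2*y) (by linarith)
        have h2 := Real.sinh_two_mul y
        nlinarith
      have hB := my_scs_pos y hy
      have hC := Real.cosh_sq y
      have hcp := Real.cosh_pos (x := y)
      have hsp := Real.sinh_pos_iff.mpr hy
      nlinarith [mul_le_mul_of_nonneg_right hA (le_of_lt hcp),
        mul_pos (mul_pos hy hy) (sub_pos.mpr hB)]) s hs
  linarith

private lemma my_Q_pos (t : ℝ) (ht : 0 < t) :
    0 < t*Real.sinh t*(Real.sinh t - t) - (t*Real.cosh t - Real.sinh t)*(Real.cosh t - 1) := by
  have hs : 0 < t/2 := by linarith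
  have h2 : t = 2*(t/2) := by ring
  rw [h2, Real.sinh_two_mul, Real.cosh_two_mul]
  set s := t/2
  have key : 2*(s)*(2*Real.sinh s*Real.cosh s)*(2*Real.sinh s*Real.cosh s - 2*s)
      - (2*s*(Real.cosh s^2 + Real.sinh s^2) - 2*Real.sinh s*Real.cosh s)*((Real.cosh s^2 + Real.sinh s^2) - 1)
      = 4*Real.sinh s*(Real.sinh s^2 * Real.cosh s + s * Real.sinh s - 2*s^2*Real.cosh s) := by
    linear_combination (2*Real.sinh s*Real.cosh s - 2*s*(Real.cosh s^2 - Real.sinh s^2)) * (Real.cosh_sq s)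
  rw [key]
  have := my_p_pos s hs
  have hsp := Real.sinh_pos_iff.mpr hs
  positivity

private lemma my_scs_nonneg (x : ℝ) (hx : 0 ≤ x) : Real.sinh x ≤ x * Real.cosh x := by
  rcases eq_or_lt_of_le hx with h | h
  · simp [← h]
  · exact (my_scs_pos x h).le

private lemma my_cosh_ub (x : ℝ) (hx : 0 ≤ x) : Real.cosh x - 1 ≤ x^2/2 * Real.cosh x := by
  have := my_nonneg_of_deriv (f := fun y => y^2/2 * Real.cosh y - Real.cosh y + 1)
    (f' := fun y => (y * Real.cosh y + y^2/2 * Real.sinh y) - Real.sinh y)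
    (fun y => by
      have h1 := (((hasDerivAt_pow 2 y).div_const 2).mul (Real.hasDerivAt_cosh y)).sub
        (Real.hasDerivAt_cosh y)
      have h2 := h1.add_const 1
      refine h2.congr_deriv ?_
      push_cast
      ring)
    (by simp)
    (fun y hy => by
      show 0 ≤ (y * Real.cosh y + y^2/2 * Real.sinh y) - Real.sinh y
      have h1 := my_scs_nonneg y hy
      have h2 : 0 ≤ Real.sinh y := by
        have := Real.sinh_le_sinh.mpr hy
        simpa using this
      nlinarith) x hx
  linarith

noncomputable def myR (t : ℝ) : ℝ := (t * Real.cosh t - Real.sinh t) / (Real.sinh t - t)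

private lemma my_D_pos (t : ℝ) (ht : 0 < t) : 0 < Real.sinh t - t :=
  sub_pos.mpr (Real.self_lt_sinh_iff.mpr ht)

private lemma myR_hasDeriv (t : ℝ) (ht : 0 < t) :
    HasDerivAt myR ((t*Real.sinh t*(Real.sinh t - t)
      - (t*Real.cosh t - Real.sinh t)*(Real.cosh t - 1))/(Real.sinh t - t)^2) t := by
  have hD := my_D_pos t ht
  have hN : HasDerivAt (fun y => y * Real.cosh y - Real.sinh y) (t * Real.sinh t) t := by
    have h := ((hasDerivAt_id t).mul (Real.hasDerivAt_cosh t)).sub (Real.hasDerivAt_sinh t)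
    refine h.congr_deriv ?_
    simp
  have hDd : HasDerivAt (fun y => Real.sinh y - y) (Real.cosh t - 1) t :=
    (Real.hasDerivAt_sinh t).sub (hasDerivAt_id t)
  have h := hN.div hDd (ne_of_gt hD)
  exact h

private lemma myR_mono : StrictMonoOn myR (Set.Ioi 0) := by
  apply strictMonoOn_of_deriv_pos (convex_Ioi 0)
  · exact fun y hy => (myR_hasDeriv y hy).continuousAt.continuousWithinAt
  · intro y hy
    rw [interior_Ioi] at hy
    rw [(myR_hasDeriv y hy).deriv]
    exact div_pos (my_Q_pos y hy) (pow_pos (my_D_pos y hy) 2)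

private lemma myR_le (t : ℝ) (ht : 0 < t) : myR t ≤ 3 * Real.cosh t - 1 := by
  have hD := my_D_pos t ht
  have hcp := Real.cosh_pos (x := t)
  have h1 : t^3/6 ≤ Real.sinh t - t := by
    have := my_sinh_lb t ht.le
    linarith
  have h2 : t * Real.cosh t - Real.sinh t ≤ t^3*(Real.cosh t/2 - 1/6) := by
    have hu := my_cosh_ub t ht.le
    have hl := my_sinh_lb t ht.le
    nlinarith
  have h3 : (0:ℝ) ≤ t^3*(Real.cosh t/2 - 1/6) := by nlinarith [Real.one_le_cosh t, pow_pos ht 3]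
  have h4 : (0:ℝ) < t^3/6 := by positivity
  have := div_le_div₀ h3 h2 h4 h1
  calc myR t ≤ t^3*(Real.cosh t/2 - 1/6) / (t^3/6) := this
    _ = 3 * Real.cosh t - 1 := by field_simp; ring

private lemma myR_ge (t : ℝ) (ht : 1 ≤ t) : t - 1 ≤ myR t := by
  have ht0 : (0:ℝ) < t := by linarith
  have hD := my_D_pos t ht0
  have hcp := Real.cosh_pos (x := t)
  have hsc : Real.sinh t ≤ Real.cosh t := by
    have := Real.cosh_sub_sinh t
    have := Real.exp_pos (-t)
    linarith
  have hN : (t-1) * Real.cosh t ≤ t * Real.cosh t - Real.sinh t := by nlinarith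
  have hA : (0:ℝ) ≤ t * Real.cosh t - Real.sinh t := by nlinarith
  have hDle : Real.sinh t - t ≤ Real.cosh t := by
    have := Real.self_lt_sinh_iff.mpr ht0
    linarith
  have := div_le_div₀ hA hN hD hDle
  calc t - 1 = (t-1) * Real.cosh t / Real.cosh t := by field_simp
    _ ≤ myR t := this

/-- For `h > (1/2)ln(2+√3)` and `β = (3/2)cosh²h`, the fixed point equation
`Γ_{β,h}(x) = x` has exactly one positive solution. -/
theorem unique_positive_fixed_point_critical (β h : ℝ)
    (hh : 1 / 2 * Real.log (2 + Real.sqrt 3) < h)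
    (hβ : β = 3 / 2 * Real.cosh h ^ 2)
    (Γ : ℝ → ℝ)
    (hΓ : ∀ x, Γ x = β / 3 * (Real.tanh (x + h) + Real.tanh (x - h))) :
    ∃! x : ℝ, 0 < x ∧ Γ x = x := by
  set c := Real.cosh (2*h) with hc
  have hsq3 : (0:ℝ) ≤ Real.sqrt 3 := Real.sqrt_nonneg 3
  have hlogpos : 0 < Real.log (2 + Real.sqrt 3) := Real.log_pos (by linarith)
  have hpos : 0 < h := by linarith
  have h3 : Real.sqrt 3 ^ 2 = 3 := Real.sq_sqrt (by norm_num)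
  have hclog : Real.cosh (Real.log (2 + Real.sqrt 3)) = 2 := by
    rw [Real.cosh_eq, Real.exp_neg, Real.exp_log (by linarith)]
    have hmul : (2 + Real.sqrt 3) * (2 - Real.sqrt 3) = 1 := by nlinarith
    rw [inv_eq_of_mul_eq_one_right hmul]
    ring
  have hc2 : 2 < c := by
    have h4 : Real.cosh (Real.log (2 + Real.sqrt 3)) < Real.cosh (2*h) := by
      rw [Real.cosh_lt_cosh, abs_of_pos hlogpos, abs_of_pos (by linarith : (0:ℝ) < 2*h)]
      linarith
    rw [hclog] at h4
    rw [hc]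
    exact h4
  -- the fixed point equation is equivalent to myR (2x) = c
  have hequiv : ∀ x : ℝ, 0 < x → (Γ x = x ↔ myR (2*x) = c) := by
    intro x hx
    have hcx : 0 < Real.cosh (x+h) := Real.cosh_pos _
    have hcy : 0 < Real.cosh (x-h) := Real.cosh_pos _
    have hsum : Real.tanh (x+h) + Real.tanh (x-h)
        = Real.sinh (2*x) / (Real.cosh (x+h) * Real.cosh (x-h)) := by
      rw [Real.tanh_eq_sinh_div_cosh, Real.tanh_eq_sinh_div_cosh,
        div_add_div _ _ (ne_of_gt hcx) (ne_of_gt hcy)]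
      congr 1
      have hsa := Real.sinh_add (x+h) (x-h)
      rw [show (x+h)+(x-h) = 2*x by ring] at hsa
      rw [hsa]
    have hprod : Real.cosh (x+h) * Real.cosh (x-h) = (Real.cosh (2*x) + c)/2 := by
      have e1 := Real.cosh_add (x+h) (x-h)
      have e2 := Real.cosh_sub (x+h) (x-h)
      rw [show (x+h)+(x-h) = 2*x by ring] at e1
      rw [show (x+h)-(x-h) = 2*h by ring] at e2
      rw [hc]; linarith
    have hcoshsq : Real.cosh h^2 = (c+1)/2 := by
      rw [hc]
      have e1 := Real.cosh_two_mul h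
      have e2 := Real.cosh_sq h
      linarith
    have hdpos : 0 < Real.cosh (2*x) + c := by
      have h1 := Real.cosh_pos (x := 2*x)
      have h2 := Real.cosh_pos (x := 2*h)
      rw [hc]; linarith
    have hD := my_D_pos (2*x) (by linarith)
    have hΓx : Γ x = (c+1) * Real.sinh (2*x) / (2*(Real.cosh (2*x) + c)) := by
      rw [hΓ, hsum, hprod, hβ, hcoshsq]
      field_simp
    rw [hΓx, myR, div_eq_iff (ne_of_gt (by positivity : (0:ℝ) < 2*(Real.cosh (2*x) + c))),
      div_eq_iff (ne_of_gt hD)]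
    constructor
    · intro hl; linarith
    · intro hl; linarith
  -- existence of a root of myR = c
  obtain ⟨δ, hδpos, hδ⟩ := Metric.continuousAt_iff.mp
    (Real.continuous_cosh.continuousAt (x := 0)) ((c+1)/3 - 1) (by linarith)
  set t₀ := min (δ/2) 1 with ht₀def
  have ht₀pos : 0 < t₀ := lt_min (by linarith) one_pos
  have ht₀le1 : t₀ ≤ 1 := min_le_right _ _
  have hcosht₀ : Real.cosh t₀ < (c+1)/3 := by
    have hd : dist t₀ 0 < δ := by
      rw [Real.dist_eq, sub_zero, abs_of_pos ht₀pos]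
      calc t₀ ≤ δ/2 := min_le_left _ _
        _ < δ := by linarith
    have h5 := hδ hd
    rw [Real.dist_eq, Real.cosh_zero] at h5
    have h6 := abs_lt.mp h5
    linarith [h6.2]
  set T := c + 2 with hT
  have hT1 : (1:ℝ) ≤ T := by rw [hT]; linarith
  have ht₀T : t₀ ≤ T := by linarith
  have hcont : ContinuousOn myR (Set.Icc t₀ T) := fun t htm =>
    (myR_hasDeriv t (lt_of_lt_of_le ht₀pos htm.1)).continuousAt.continuousWithinAt
  have hmem : c ∈ Set.Icc (myR t₀) (myR T) := by
    constructor
    · calc myR t₀ ≤ 3*Real.cosh t₀ - 1 := myR_le t₀ ht₀pos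
        _ ≤ c := by linarith
    · calc c ≤ T - 1 := by rw [hT]; linarith
        _ ≤ myR T := myR_ge T hT1
  obtain ⟨ts, htsmem, htseq⟩ := intermediate_value_Icc ht₀T hcont hmem
  have htspos : 0 < ts := lt_of_lt_of_le ht₀pos htsmem.1
  refine ⟨ts/2, ⟨by linarith, ?_⟩, ?_⟩
  · exact (hequiv (ts/2) (by linarith)).mpr (by rw [show 2*(ts/2) = ts by ring]; exact htseq)
  · rintro y ⟨hy, hfy⟩
    have h1 := (hequiv y hy).mp hfy
    have h2 := myR_mono.injOn (Set.mem_Ioi.mpr (by linarith : (0:ℝ) < 2*y))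
      (Set.mem_Ioi.mpr htspos) (h1.trans htseq.symm)
    linarith
end

section
/- Let h > (1/2)·ln(2+√3). Then there exists β_T ∈ (0, (3/2)·cosh²(h)) such that: (i) for every β with 0 < β < β_T, the equation Γ_{β,h}(λ) = λ has no solution λ > 0; and (ii) for every β with β_T < β < (3/2)·cosh²(h), the equation Γ_{β,h}(λ) = λ has exactly two solutions λ > 0. -/
open Real Set Filter Topology

/-- auxiliary: `cosh t ≥ 1 + t²/2` for `t ≥ 0`. -/
lemma aux_cosh_ge (t : ℝ) (ht : 0 ≤ t) : 1 + t ^ 2 / 2 ≤ Real.cosh t := by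
  have hd : ∀ x : ℝ, HasDerivAt (fun s : ℝ => Real.cosh s - 1 - s ^ 2 / 2)
      (Real.sinh x - x) x := by
    intro x
    have h1 : HasDerivAt (fun s : ℝ => Real.cosh s - 1 - s ^ 2 / 2)
        (Real.sinh x - (2:ℕ) * x ^ (2-1) / 2) x :=
      ((Real.hasDerivAt_cosh x).sub_const 1).sub ((hasDerivAt_pow 2 x).div_const 2)
    convert h1 using 1; push_cast; ring
  have hmono : MonotoneOn (fun s : ℝ => Real.cosh s - 1 - s ^ 2 / 2) (Ici (0:ℝ)) := by
    apply monotoneOn_of_deriv_nonneg (convex_Ici 0)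
    · exact fun x _ => ((hd x).continuousAt.continuousWithinAt)
    · exact fun x _ => ((hd x).differentiableAt.differentiableWithinAt)
    · intro x hx
      rw [interior_Ici, mem_Ioi] at hx
      rw [(hd x).deriv]
      have := Real.self_lt_sinh_iff.2 hx
      linarith
  have h0 : (fun s : ℝ => Real.cosh s - 1 - s ^ 2 / 2) 0 = 0 := by simp
  have := hmono (self_mem_Ici) (mem_Ici.2 ht) ht
  simp only [h0] at this ⊢
  simp at this
  linarith

/-- auxiliary: `sinh t ≥ t + t³/6` for `t ≥ 0`. -/
lemma aux_sinh_ge (t : ℝ) (ht : 0 ≤ t) : t + t ^ 3 / 6 ≤ Real.sinh t := by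
  have hd : ∀ x : ℝ, HasDerivAt (fun s : ℝ => Real.sinh s - s - s ^ 3 / 6)
      (Real.cosh x - 1 - x ^ 2 / 2) x := by
    intro x
    have h1 : HasDerivAt (fun s : ℝ => Real.sinh s - s - s ^ 3 / 6)
        (Real.cosh x - 1 - (3:ℕ) * x ^ (3-1) / 6) x :=
      ((Real.hasDerivAt_sinh x).sub (hasDerivAt_id x)).sub ((hasDerivAt_pow 3 x).div_const 6)
    convert h1 using 1; push_cast; ring
  have hmono : MonotoneOn (fun s : ℝ => Real.sinh s - s - s ^ 3 / 6) (Ici (0:ℝ)) := by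
    apply monotoneOn_of_deriv_nonneg (convex_Ici 0)
    · exact fun x _ => ((hd x).continuousAt.continuousWithinAt)
    · exact fun x _ => ((hd x).differentiableAt.differentiableWithinAt)
    · intro x hx
      rw [interior_Ici, mem_Ioi] at hx
      rw [(hd x).deriv]
      have := aux_cosh_ge x hx.le
      linarith
  have := hmono (self_mem_Ici) (mem_Ici.2 ht) ht
  simp only [Real.sinh_zero] at this
  simp at this
  linarith
noncomputable def uuT (c t : ℝ) : ℝ := 2 * Real.sinh t - c * t

noncomputable def psiT (c t : ℝ) : ℝ :=
  (Real.cosh t + c) * Real.sinh t - t * (1 + c * Real.cosh t)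

lemma uu_hasDeriv (c x : ℝ) : HasDerivAt (uuT c) (2 * Real.cosh x - c) x := by
  have h1 : HasDerivAt (fun t : ℝ => 2 * Real.sinh t - c * t)
      (2 * Real.cosh x - c * 1) x :=
    ((Real.hasDerivAt_sinh x).const_mul 2).sub ((hasDerivAt_id x).const_mul c)
  show HasDerivAt (fun t : ℝ => 2 * Real.sinh t - c * t) _ x
  simpa using h1

lemma uu_sign (c : ℝ) (hc : 2 < c) :
    ∃ t₁ : ℝ, 0 < t₁ ∧ uuT c t₁ = 0 ∧ (∀ t ∈ Ioo (0:ℝ) t₁, uuT c t < 0) ∧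
      (∀ t ∈ Ioi t₁, 0 < uuT c t) := by
  have hc0 : (0:ℝ) < c := by linarith
  -- find s₀ with cosh s₀ = c/2
  obtain ⟨s₀, hs₀mem, hs₀⟩ : ∃ s₀ ∈ Icc (0:ℝ) c, Real.cosh s₀ = c / 2 := by
    have hiv := intermediate_value_Icc (le_of_lt hc0)
      (Real.continuous_cosh.continuousOn (s := Icc (0:ℝ) c))
    have hmem : c / 2 ∈ Icc (Real.cosh 0) (Real.cosh c) := by
      constructor
      · rw [Real.cosh_zero]; linarith
      · have := aux_cosh_ge c hc0.le
        nlinarith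
    exact hiv hmem
  have hs₀pos : 0 < s₀ := by
    rcases lt_or_eq_of_le hs₀mem.1 with h | h
    · exact h
    · exfalso; rw [← h, Real.cosh_zero] at hs₀; linarith
  -- u strictly anti on [0,s₀]
  have hanti : StrictAntiOn (uuT c) (Icc 0 s₀) := by
    apply strictAntiOn_of_deriv_neg (convex_Icc 0 s₀)
    · exact fun x _ => (uu_hasDeriv c x).continuousAt.continuousWithinAt
    · intro x hx
      rw [interior_Icc] at hx
      rw [(uu_hasDeriv c x).deriv]
      have : Real.cosh x < Real.cosh s₀ :=
        Real.cosh_strictMonoOn (mem_Ici.2 hx.1.le) (mem_Ici.2 hs₀pos.le) hx.2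
      rw [hs₀] at this; linarith
  -- u strictly mono on [s₀,∞)
  have hmono : StrictMonoOn (uuT c) (Ici s₀) := by
    apply strictMonoOn_of_deriv_pos (convex_Ici s₀)
    · exact fun x _ => (uu_hasDeriv c x).continuousAt.continuousWithinAt
    · intro x hx
      rw [interior_Ici, mem_Ioi] at hx
      rw [(uu_hasDeriv c x).deriv]
      have : Real.cosh s₀ < Real.cosh x :=
        Real.cosh_strictMonoOn (mem_Ici.2 hs₀pos.le) (mem_Ici.2 (hs₀pos.trans hx).le) hx
      rw [hs₀] at this; linarith
  have hu0 : uuT c 0 = 0 := by simp [uuT]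
  have hus₀ : uuT c s₀ < 0 := by
    have := hanti (left_mem_Icc.2 hs₀pos.le) (right_mem_Icc.2 hs₀pos.le) hs₀pos
    rwa [hu0] at this
  -- a big point where u > 0
  obtain ⟨T, hTs₀, hTpos, hT2⟩ : ∃ T : ℝ, s₀ < T ∧ 0 < T ∧ 3 * c ≤ T ^ 2 := by
    refine ⟨max s₀ (Real.sqrt (3 * c)) + 1, ?_, ?_, ?_⟩
    · have : s₀ ≤ max s₀ (Real.sqrt (3 * c)) := le_max_left _ _
      linarith
    · have h1 : (0:ℝ) ≤ Real.sqrt (3 * c) := Real.sqrt_nonneg _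
      have : Real.sqrt (3 * c) ≤ max s₀ (Real.sqrt (3 * c)) := le_max_right _ _
      linarith
    · have h1 : Real.sqrt (3 * c) ≤ max s₀ (Real.sqrt (3 * c)) := le_max_right _ _
      have h2 : Real.sqrt (3 * c) ^ 2 = 3 * c := Real.sq_sqrt (by linarith)
      nlinarith [Real.sqrt_nonneg (3 * c)]
  have huT : 0 < uuT c T := by
    rw [uuT]
    have hs := aux_sinh_ge T hTpos.le
    have h3 : T * (3 * c) ≤ T * T ^ 2 := mul_le_mul_of_nonneg_left hT2 hTpos.le
    have hT3 : T ^ 3 = T * T ^ 2 := by ring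
    linarith
  -- IVT on [s₀, T]
  obtain ⟨t₁, ht₁mem, ht₁⟩ : ∃ t₁ ∈ Icc s₀ T, uuT c t₁ = 0 := by
    have hiv := intermediate_value_Icc hTs₀.le
      (fun x _ => (uu_hasDeriv c x).continuousAt.continuousWithinAt)
    exact hiv ⟨hus₀.le, huT.le⟩
  have ht₁s₀ : s₀ < t₁ := by
    rcases lt_or_eq_of_le ht₁mem.1 with h | h
    · exact h
    · exfalso; rw [← h] at ht₁; linarith
  refine ⟨t₁, hs₀pos.trans ht₁s₀, ht₁, ?_, ?_⟩
  · intro t ht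
    rcases le_or_gt t s₀ with h | h
    · have := hanti (left_mem_Icc.2 hs₀pos.le) ⟨ht.1.le, h⟩ ht.1
      rwa [hu0] at this
    · have := hmono (mem_Ici.2 h.le) (mem_Ici.2 (h.le.trans ht.2.le)) ht.2
      rwa [ht₁] at this
  · intro t ht
    rw [mem_Ioi] at ht
    have := hmono (mem_Ici.2 ht₁s₀.le) (mem_Ici.2 (ht₁s₀.le.trans ht.le)) ht
    rwa [ht₁] at this
lemma psi_hasDeriv (c x : ℝ) :
    HasDerivAt (psiT c) (Real.sinh x * uuT c x) x := by
  have h1 : HasDerivAt (fun t : ℝ => (Real.cosh t + c) * Real.sinh t)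
      (Real.sinh x * Real.sinh x + (Real.cosh x + c) * Real.cosh x) x :=
    ((Real.hasDerivAt_cosh x).add_const c).mul (Real.hasDerivAt_sinh x)
  have h2 : HasDerivAt (fun t : ℝ => t * (1 + c * Real.cosh t))
      (1 * (1 + c * Real.cosh x) + x * (c * Real.sinh x)) x :=
    (hasDerivAt_id x).mul (((Real.hasDerivAt_cosh x).const_mul c).const_add 1)
  have h3 := h1.sub h2
  have hE : Real.sinh x * Real.sinh x + (Real.cosh x + c) * Real.cosh x -
      (1 * (1 + c * Real.cosh x) + x * (c * Real.sinh x)) = Real.sinh x * uuT c x := by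
    have hsq := Real.cosh_sq x
    rw [uuT]; nlinarith [hsq]
  rw [← hE]
  exact h3

lemma psi_sign (c : ℝ) (hc : 2 < c) :
    ∃ ts : ℝ, 0 < ts ∧ psiT c ts = 0 ∧ (∀ t ∈ Ioo (0:ℝ) ts, psiT c t < 0) ∧
      (∀ t ∈ Ioi ts, 0 < psiT c t) := by
  have hc0 : (0:ℝ) < c := by linarith
  obtain ⟨t₁, ht₁pos, ht₁0, huneg, hupos⟩ := uu_sign c hc
  -- psi strictly anti on [0,t₁]
  have hanti : StrictAntiOn (psiT c) (Icc 0 t₁) := by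
    apply strictAntiOn_of_deriv_neg (convex_Icc 0 t₁)
    · exact fun x _ => (psi_hasDeriv c x).continuousAt.continuousWithinAt
    · intro x hx
      rw [interior_Icc] at hx
      rw [(psi_hasDeriv c x).deriv]
      have h1 : 0 < Real.sinh x := Real.sinh_pos_iff.2 hx.1
      have h2 : uuT c x < 0 := huneg x hx
      exact mul_neg_of_pos_of_neg h1 h2
  -- psi strictly mono on [t₁,∞)
  have hmono : StrictMonoOn (psiT c) (Ici t₁) := by
    apply strictMonoOn_of_deriv_pos (convex_Ici t₁)
    · exact fun x _ => (psi_hasDeriv c x).continuousAt.continuousWithinAt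
    · intro x hx
      rw [interior_Ici, mem_Ioi] at hx
      rw [(psi_hasDeriv c x).deriv]
      have h1 : 0 < Real.sinh x := Real.sinh_pos_iff.2 (ht₁pos.trans hx)
      exact mul_pos h1 (hupos x hx)
  have hpsi0 : psiT c 0 = 0 := by simp [psiT]
  have hpsit₁ : psiT c t₁ < 0 := by
    have := hanti (left_mem_Icc.2 ht₁pos.le) (right_mem_Icc.2 ht₁pos.le) ht₁pos
    rwa [hpsi0] at this
  -- big point where psi > 0
  obtain ⟨T, hTt₁, hTpos, hT2⟩ : ∃ T : ℝ, t₁ < T ∧ 0 < T ∧ 6 * c ≤ T ^ 2 := by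
    refine ⟨max t₁ (Real.sqrt (6 * c)) + 1, ?_, ?_, ?_⟩
    · have : t₁ ≤ max t₁ (Real.sqrt (6 * c)) := le_max_left _ _
      linarith
    · have h1 : (0:ℝ) ≤ Real.sqrt (6 * c) := Real.sqrt_nonneg _
      have : Real.sqrt (6 * c) ≤ max t₁ (Real.sqrt (6 * c)) := le_max_right _ _
      linarith
    · have h1 : Real.sqrt (6 * c) ≤ max t₁ (Real.sqrt (6 * c)) := le_max_right _ _
      have h2 : Real.sqrt (6 * c) ^ 2 = 6 * c := Real.sq_sqrt (by linarith)
      nlinarith [Real.sqrt_nonneg (6 * c)]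
  have hpsiT : 0 < psiT c T := by
    rw [psiT]
    have hs := aux_sinh_ge T hTpos.le
    -- sinh T - c*T ≥ T  since T^3/6 ≥ c*T
    have h3 : T * (6 * c) ≤ T * T ^ 2 := mul_le_mul_of_nonneg_left hT2 hTpos.le
    have hT3 : T ^ 3 = T * T ^ 2 := by ring
    have hkey : c * T + T ≤ Real.sinh T := by linarith
    have hch : 1 ≤ Real.cosh T := Real.one_le_cosh T
    have hsh : 0 < Real.sinh T := Real.sinh_pos_iff.2 hTpos
    -- (cosh+c) sinh - T(1+c cosh) = cosh (sinh - cT) + c sinh - T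
    nlinarith [mul_le_mul_of_nonneg_left hkey (by linarith : (0:ℝ) ≤ Real.cosh T)]
  obtain ⟨ts, htsmem, hts⟩ : ∃ ts ∈ Icc t₁ T, psiT c ts = 0 := by
    have hiv := intermediate_value_Icc hTt₁.le
      (fun x _ => (psi_hasDeriv c x).continuousAt.continuousWithinAt)
    exact hiv ⟨hpsit₁.le, hpsiT.le⟩
  have htst₁ : t₁ < ts := by
    rcases lt_or_eq_of_le htsmem.1 with h | h
    · exact h
    · exfalso; rw [← h] at hts; linarith
  refine ⟨ts, ht₁pos.trans htst₁, hts, ?_, ?_⟩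
  · intro t ht
    rcases le_or_gt t t₁ with h | h
    · have := hanti (left_mem_Icc.2 ht₁pos.le) ⟨ht.1.le, h⟩ ht.1
      rwa [hpsi0] at this
    · have := hmono (mem_Ici.2 h.le) (mem_Ici.2 (h.le.trans ht.2.le)) ht.2
      rwa [hts] at this
  · intro t ht
    rw [mem_Ioi] at ht
    have := hmono (mem_Ici.2 htst₁.le) (mem_Ici.2 (htst₁.le.trans ht.le)) ht
    rwa [hts] at this
noncomputable def phiT (c t : ℝ) : ℝ := t * (Real.cosh t + c) / Real.sinh t

lemma phi_hasDeriv (c : ℝ) {x : ℝ} (hx : 0 < x) :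
    HasDerivAt (phiT c) (psiT c x / Real.sinh x ^ 2) x := by
  have hsx : Real.sinh x ≠ 0 := ne_of_gt (Real.sinh_pos_iff.2 hx)
  have hN : HasDerivAt (fun t : ℝ => t * (Real.cosh t + c))
      (1 * (Real.cosh x + c) + x * Real.sinh x) x :=
    (hasDerivAt_id x).mul ((Real.hasDerivAt_cosh x).add_const c)
  have h := hN.div (Real.hasDerivAt_sinh x) hsx
  have hE : ((1 * (Real.cosh x + c) + x * Real.sinh x) * Real.sinh x -
      x * (Real.cosh x + c) * Real.cosh x) / Real.sinh x ^ 2 =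
      psiT c x / Real.sinh x ^ 2 := by
    congr 1
    have hsq := Real.cosh_sq x
    rw [psiT]; nlinarith [hsq]
  rw [← hE]
  exact h

lemma phi_gt_self (c : ℝ) (hc : 0 < c) {t : ℝ} (ht : 0 < t) : t < phiT c t := by
  have hsh : 0 < Real.sinh t := Real.sinh_pos_iff.2 ht
  rw [phiT, lt_div_iff₀ hsh]
  have h1 : Real.sinh t < Real.cosh t + c := by
    have := Real.cosh_sub_sinh t
    have := Real.exp_pos (-t)
    linarith
  nlinarith

lemma phi_tendsto_zero (c : ℝ) :
    Tendsto (phiT c) (𝓝[>] (0:ℝ)) (𝓝 (1 + c)) := by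
  have h1 : Tendsto (fun t : ℝ => Real.sinh t / t) (𝓝[≠] (0:ℝ)) (𝓝 1) := by
    have := hasDerivAt_iff_tendsto_slope.1 (Real.hasDerivAt_sinh 0)
    rw [Real.cosh_zero] at this
    have heq : slope Real.sinh 0 = fun t : ℝ => Real.sinh t / t := by
      funext t
      rw [slope_def_field]
      simp [div_eq_div_iff]
    rwa [heq] at this
  have h2 : Tendsto (fun t : ℝ => t / Real.sinh t) (𝓝[≠] (0:ℝ)) (𝓝 1) := by
    have := h1.inv₀ (by norm_num)
    simpa [inv_div] using this
  have h3 : Tendsto (fun t : ℝ => Real.cosh t + c) (𝓝[≠] (0:ℝ)) (𝓝 (1 + c)) := by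
    have : Tendsto (fun t : ℝ => Real.cosh t + c) (𝓝 (0:ℝ)) (𝓝 (Real.cosh 0 + c)) :=
      (Real.continuous_cosh.tendsto 0).add tendsto_const_nhds
    rw [Real.cosh_zero] at this
    exact this.mono_left nhdsWithin_le_nhds
  have h4 := h2.mul h3
  rw [one_mul] at h4
  have heq : ∀ t : ℝ, t / Real.sinh t * (Real.cosh t + c) = phiT c t := by
    intro t; rw [phiT]; ring
  have h5 : Tendsto (phiT c) (𝓝[≠] (0:ℝ)) (𝓝 (1 + c)) := by
    simpa only [heq] using h4
  exact h5.mono_left (nhdsWithin_mono _ (fun x hx => ne_of_gt hx))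
lemma phi_master (c : ℝ) (hc : 2 < c) :
    ∃ m : ℝ, 0 < m ∧ m < 1 + c ∧
      (∀ t : ℝ, 0 < t → m ≤ phiT c t) ∧
      (∀ y : ℝ, m < y → y < 1 + c →
        ∃ t₁ t₂ : ℝ, 0 < t₁ ∧ 0 < t₂ ∧ t₁ ≠ t₂ ∧ phiT c t₁ = y ∧ phiT c t₂ = y ∧
          ∀ t : ℝ, 0 < t → phiT c t = y → t = t₁ ∨ t = t₂) := by
  have hc0 : (0:ℝ) < c := by linarith
  obtain ⟨ts, htspos, hts0, hpsineg, hpsipos⟩ := psi_sign c hc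
  have hcont : ∀ s : Set ℝ, (∀ x ∈ s, 0 < x) → ContinuousOn (phiT c) s := by
    intro s hs x hx
    exact ((phi_hasDeriv c (hs x hx)).continuousAt.continuousWithinAt)
  -- phi strictly anti on (0, ts]
  have hanti : StrictAntiOn (phiT c) (Ioc 0 ts) := by
    apply strictAntiOn_of_deriv_neg (convex_Ioc 0 ts)
    · exact hcont _ (fun x hx => hx.1)
    · intro x hx
      rw [interior_Ioc] at hx
      rw [(phi_hasDeriv c hx.1).deriv]
      apply div_neg_of_neg_of_pos (hpsineg x hx)
      have : 0 < Real.sinh x := Real.sinh_pos_iff.2 hx.1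
      positivity
  -- phi strictly mono on [ts, ∞)
  have hmono : StrictMonoOn (phiT c) (Ici ts) := by
    apply strictMonoOn_of_deriv_pos (convex_Ici ts)
    · exact hcont _ (fun x hx => htspos.trans_le hx)
    · intro x hx
      rw [interior_Ici, mem_Ioi] at hx
      rw [(phi_hasDeriv c (htspos.trans hx)).deriv]
      apply div_pos (hpsipos x hx)
      have : 0 < Real.sinh x := Real.sinh_pos_iff.2 (htspos.trans hx)
      positivity
  set m : ℝ := phiT c ts with hm
  have hmin : ∀ t : ℝ, 0 < t → m ≤ phiT c t := by
    intro t ht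
    rcases le_or_gt t ts with h | h
    · rcases eq_or_lt_of_le h with h' | h'
      · rw [h']
      · exact (hanti ⟨ht, h⟩ (right_mem_Ioc.2 htspos) h').le
    · exact (hmono self_mem_Ici (mem_Ici.2 h.le) h).le
  have hminlt : ∀ t : ℝ, 0 < t → t ≠ ts → m < phiT c t := by
    intro t ht hne
    rcases lt_or_gt_of_ne hne with h | h
    · exact hanti ⟨ht, h.le⟩ (right_mem_Ioc.2 htspos) h
    · exact hmono self_mem_Ici (mem_Ici.2 h.le) h
  have hmpos : 0 < m := lt_trans htspos (phi_gt_self c hc0 htspos)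
  -- m < 1 + c
  have hhalf : phiT c (ts / 2) ≤ 1 + c := by
    have hev : ∀ᶠ s in 𝓝[>] (0:ℝ), phiT c (ts / 2) ≤ phiT c s := by
      filter_upwards [Ioo_mem_nhdsGT_of_mem (⟨le_refl 0, by linarith⟩ : (0:ℝ) ∈ Ico 0 (ts/2))] with s hs
      exact (hanti ⟨hs.1, by linarith [hs.2]⟩ ⟨by linarith, by linarith⟩ hs.2).le
    exact ge_of_tendsto (phi_tendsto_zero c) hev
  have hmlt : m < 1 + c := by
    have h1 : m < phiT c (ts / 2) := hminlt _ (by linarith) (by intro h; linarith [h ▸ htspos])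
    linarith
  refine ⟨m, hmpos, hmlt, hmin, ?_⟩
  intro y hym hy1c
  -- left branch solution
  obtain ⟨s, hs, hys⟩ : ∃ s : ℝ, s ∈ Ioo 0 ts ∧ y < phiT c s := by
    have hev : ∀ᶠ s in 𝓝[>] (0:ℝ), y < phiT c s :=
      (phi_tendsto_zero c).eventually (eventually_gt_nhds hy1c)
    have hev2 : ∀ᶠ s in 𝓝[>] (0:ℝ), s ∈ Ioo 0 ts :=
      Ioo_mem_nhdsGT_of_mem ⟨le_refl 0, htspos⟩
    obtain ⟨s, h1, h2⟩ := (hev.and hev2).exists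
    exact ⟨s, h2, h1⟩
  obtain ⟨t₁, ht₁mem, ht₁⟩ : ∃ t₁ ∈ Icc s ts, phiT c t₁ = y := by
    have hiv := intermediate_value_Icc' hs.2.le (hcont _ (fun x hx => hs.1.trans_le hx.1))
    exact hiv ⟨hym.le.trans (le_refl _) |>.trans (le_of_eq rfl) |>.trans (le_refl _), hys.le⟩
  have ht₁pos : 0 < t₁ := hs.1.trans_le ht₁mem.1
  have ht₁ne : t₁ ≠ ts := by
    intro h; rw [h, ← hm] at ht₁; linarith
  have ht₁lt : t₁ < ts := lt_of_le_of_ne ht₁mem.2 ht₁ne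
  -- right branch solution
  obtain ⟨T, hTts, hTy⟩ : ∃ T : ℝ, ts < T ∧ y < phiT c T := by
    refine ⟨max ts y + 1, ?_, ?_⟩
    · have := le_max_left ts y; linarith
    · have h1 : y ≤ max ts y := le_max_right ts y
      have h2 : 0 < max ts y + 1 := by
        have := le_max_left ts y; linarith
      have := phi_gt_self c hc0 h2
      linarith
  obtain ⟨t₂, ht₂mem, ht₂⟩ : ∃ t₂ ∈ Icc ts T, phiT c t₂ = y := by
    have hiv := intermediate_value_Icc hTts.le (hcont _ (fun x hx => htspos.trans_le hx.1))
    exact hiv ⟨hym.le, hTy.le⟩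
  have ht₂ne : t₂ ≠ ts := by
    intro h; rw [h, ← hm] at ht₂; linarith
  have ht₂gt : ts < t₂ := lt_of_le_of_ne ht₂mem.1 (Ne.symm ht₂ne)
  have ht₂pos : 0 < t₂ := htspos.trans ht₂gt
  refine ⟨t₁, t₂, ht₁pos, ht₂pos, by linarith, ht₁, ht₂, ?_⟩
  intro t ht hty
  rcases lt_trichotomy t ts with h | h | h
  · left
    exact hanti.injOn ⟨ht, h.le⟩ ⟨ht₁pos, ht₁lt.le⟩ (by rw [hty, ht₁])
  · exfalso
    rw [h, ← hm] at hty
    linarith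
  · right
    exact hmono.injOn (mem_Ici.2 h.le) (mem_Ici.2 ht₂gt.le) (by rw [hty, ht₂])
lemma cosh_log_special : Real.cosh (Real.log (2 + Real.sqrt 3)) = 2 := by
  have hs : Real.sqrt 3 ^ 2 = 3 := Real.sq_sqrt (by norm_num)
  have hs0 : 0 ≤ Real.sqrt 3 := Real.sqrt_nonneg 3
  have hpos : (0:ℝ) < 2 + Real.sqrt 3 := by linarith
  rw [Real.cosh_log hpos]
  have hinv : (2 + Real.sqrt 3)⁻¹ = 2 - Real.sqrt 3 :=
    inv_eq_of_mul_eq_one_right (by nlinarith [hs])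
  rw [hinv]; ring

/-- For `h > (1/2)ln(2+√3)` there is a threshold `β_T ∈ (0, (3/2)cosh²h)` such
that for `0 < β < β_T` the equation `Γ_{β,h}(x) = x` has no positive solution,
while for `β_T < β < (3/2)cosh²h` it has exactly two positive solutions. -/
theorem tangency_threshold (h : ℝ)
    (hh : 1 / 2 * Real.log (2 + Real.sqrt 3) < h)
    (Γ : ℝ → ℝ → ℝ)
    (hΓ : ∀ β x, Γ β x = β / 3 * (Real.tanh (x + h) + Real.tanh (x - h))) :
    ∃ βT : ℝ, 0 < βT ∧ βT < 3 / 2 * Real.cosh h ^ 2 ∧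
      (∀ β : ℝ, 0 < β → β < βT → ¬∃ x : ℝ, 0 < x ∧ Γ β x = x) ∧
      (∀ β : ℝ, βT < β → β < 3 / 2 * Real.cosh h ^ 2 →
        ∃ x₁ x₂ : ℝ, 0 < x₁ ∧ 0 < x₂ ∧ x₁ ≠ x₂ ∧
          Γ β x₁ = x₁ ∧ Γ β x₂ = x₂ ∧
          ∀ x : ℝ, 0 < x → Γ β x = x → x = x₁ ∨ x = x₂) := by
  set c : ℝ := Real.cosh (2 * h) with hcdef
  have hlog0 : 0 ≤ Real.log (2 + Real.sqrt 3) := by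
    apply Real.log_nonneg
    have := Real.sqrt_nonneg 3; linarith
  have hhpos : 0 < h := by linarith
  have hc : 2 < c := by
    have := Real.cosh_strictMonoOn (mem_Ici.2 hlog0)
      (mem_Ici.2 (by linarith : (0:ℝ) ≤ 2 * h)) (by linarith)
    rw [cosh_log_special] at this
    rw [hcdef]; exact this
  have hc0 : (0:ℝ) < c := by linarith
  -- 1 + c = 2 cosh² h
  have h1c : 1 + c = 2 * Real.cosh h ^ 2 := by
    rw [hcdef, Real.cosh_two_mul]
    have := Real.cosh_sq h
    linarith
  -- the key reformulation
  have key : ∀ β x : ℝ, 0 < x → (Γ β x = x ↔ phiT c (2 * x) = 4 * β / 3) := by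
    intro β x hx
    have hcA : 0 < Real.cosh (x + h) := Real.cosh_pos _
    have hcB : 0 < Real.cosh (x - h) := Real.cosh_pos _
    have hs2 : 0 < Real.sinh (2 * x) := Real.sinh_pos_iff.2 (by linarith)
    have hC : 0 < Real.cosh (2 * x) + c := by
      have := Real.cosh_pos (x := 2 * x); linarith
    have e1 : Real.sinh (x + h) * Real.cosh (x - h) + Real.cosh (x + h) * Real.sinh (x - h)
        = Real.sinh (2 * x) := by
      rw [show (2:ℝ) * x = (x + h) + (x - h) by ring]
      exact (Real.sinh_add (x + h) (x - h)).symm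
    have e2 : Real.cosh (x + h) * Real.cosh (x - h)
        = (Real.cosh (2 * x) + c) / 2 := by
      rw [hcdef, Real.cosh_add, Real.cosh_sub, Real.cosh_two_mul, Real.cosh_two_mul]
      linear_combination ((Real.cosh h ^ 2 + Real.sinh h ^ 2) / 2) * Real.cosh_sq x +
        ((Real.cosh x ^ 2 + Real.sinh x ^ 2) / 2) * Real.cosh_sq h
    have hsum : Real.sinh (x + h) / Real.cosh (x + h) + Real.sinh (x - h) / Real.cosh (x - h)
        = 2 * Real.sinh (2 * x) / (Real.cosh (2 * x) + c) := by
      rw [div_add_div _ _ hcA.ne' hcB.ne', div_eq_div_iff (by positivity) hC.ne']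
      linear_combination (Real.cosh (2 * x) + c) * e1 - 2 * Real.sinh (2 * x) * e2
    rw [hΓ, Real.tanh_eq_sinh_div_cosh, Real.tanh_eq_sinh_div_cosh, hsum, phiT]
    rw [div_eq_iff hs2.ne']
    constructor
    · intro H
      have H2 : β * (2 * Real.sinh (2 * x)) = x * (3 * (Real.cosh (2 * x) + c)) := by
        field_simp at H
        linarith
      linear_combination (-2/3 : ℝ) * H2
    · intro H
      rw [mul_comm (β / 3), div_mul_eq_mul_div, div_eq_iff hC.ne']
      linear_combination (-1/2 : ℝ) * H
  obtain ⟨m, hm0, hm1c, hmin, htwo⟩ := phi_master c hc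
  refine ⟨3 / 4 * m, by linarith, by linarith, ?_, ?_⟩
  · rintro β hβ0 hβT ⟨x, hx, hfix⟩
    have := (key β x hx).1 hfix
    have hge := hmin (2 * x) (by linarith)
    rw [this] at hge
    linarith
  · intro β hβT hβc
    obtain ⟨t₁, t₂, ht₁, ht₂, hne, he₁, he₂, huniq⟩ :=
      htwo (4 * β / 3) (by linarith) (by linarith)
    refine ⟨t₁ / 2, t₂ / 2, by linarith, by linarith, ?_, ?_, ?_, ?_⟩
    · intro H; apply hne; linarith [H]
    · rw [key β (t₁ / 2) (by linarith)]
      rw [show 2 * (t₁ / 2) = t₁ by ring]; exact he₁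
    · rw [key β (t₂ / 2) (by linarith)]
      rw [show 2 * (t₂ / 2) = t₂ by ring]; exact he₂
    · intro x hx hfix
      have := (key β x hx).1 hfix
      rcases huniq (2 * x) (by linarith) this with H | H
      · left; linarith
      · right; linarith
end
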